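/- Let D(z) = z^{α/2}φ(z)^{-α/2} and a(z) = (z-1)^{1/4} z^{-1/4}, and define the 2×2 matrix P^{(∞)}(z) = 2^{-ασ₃}·[[ (a+a^{-1})/2, (a-a^{-1})/(2i) ], [ -(a-a^{-1})/(2i), (a+a^{-1})/2 ]]·D(z)^{-σ₃} for z ∈ ℂ\[0,1], where σ₃ = diag(1,-1). Then det P^{(∞)}(z) = 1 for all z ∈ ℂ\[0,1], P^{(∞)}(z) → I as z → ∞, and the boundary values on (0,1) satisfy P^{(∞)}₊(x) = P^{(∞)}₋(x)·[[0, x^α],[-x^{-α}, 0]]. -/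

import Mathlib

open Filter Matrix

/-- The conformal map `φ(z) = 2(z - 1/2) + 2 z^{1/2}(z-1)^{1/2}` (principal branches). -/
noncomputable def phiMap (z : ℂ) : ℂ :=
  2 * (z - 1/2) + 2 * z ^ ((1:ℂ)/2) * (z - 1) ^ ((1:ℂ)/2)

/-- The Szegő function `D(z) = z^{α/2} φ(z)^{-α/2}`. -/
noncomputable def szego (α : ℝ) (z : ℂ) : ℂ :=
  z ^ ((α : ℂ)/2) / (phiMap z) ^ ((α : ℂ)/2)

/-- The function `a(z) = (z-1)^{1/4}/z^{1/4}` (principal branches). -/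
noncomputable def aFun (z : ℂ) : ℂ := (z - 1) ^ ((1:ℂ)/4) / z ^ ((1:ℂ)/4)

/-- The outer parametrix
`P^{(∞)}(z) = 2^{-ασ₃} [[ (a+a⁻¹)/2, (a-a⁻¹)/(2i)],[-(a-a⁻¹)/(2i), (a+a⁻¹)/2]] D(z)^{-σ₃}`. -/
noncomputable def Pinfty (α : ℝ) (z : ℂ) : Matrix (Fin 2) (Fin 2) ℂ :=
  !![(2:ℂ) ^ (-α : ℂ), 0; 0, (2:ℂ) ^ (α : ℂ)] *
  !![(aFun z + (aFun z)⁻¹)/2, (aFun z - (aFun z)⁻¹)/(2*Complex.I);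
     -((aFun z - (aFun z)⁻¹)/(2*Complex.I)), (aFun z + (aFun z)⁻¹)/2] *
  !![(szego α z)⁻¹, 0; 0, szego α z]

/-- The segment `[0,1]` viewed as a subset of `ℂ`. -/
def unitSegment : Set ℂ := (fun x : ℝ => (x : ℂ)) '' Set.Icc 0 1

/-! ### Auxiliary machinery -/

set_option maxHeartbeats 1000000

section Helpers

/-- square of principal square root -/
lemma sq_cpow_half {z : ℂ} (hz : z ≠ 0) : z ^ ((1:ℂ)/2) * z ^ ((1:ℂ)/2) = z := by
  rw [← Complex.cpow_add _ _ hz]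
  norm_num

lemma phiMap_ne_zero (z : ℂ) : phiMap z ≠ 0 := by
  by_cases hz : z = 0
  · subst hz
    simp [phiMap, Complex.zero_cpow (show ((1:ℂ)/2) ≠ 0 by norm_num)]
  by_cases hz1 : z = 1
  · subst hz1
    norm_num [phiMap, Complex.zero_cpow (show ((1:ℂ)/2) ≠ 0 by norm_num)]
  intro h
  rw [phiMap] at h
  have hz1' : z - 1 ≠ 0 := sub_ne_zero.mpr hz1
  have hs := sq_cpow_half hz
  have hs' := sq_cpow_half hz1'
  have h3 : (2 * z ^ ((1:ℂ)/2) * (z - 1) ^ ((1:ℂ)/2))^2 = 4 * z * (z-1) := by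
    linear_combination (4*((z-1) ^ ((1:ℂ)/2)*(z-1) ^ ((1:ℂ)/2))) * hs + (4*z) * hs'
  have h2 : (2 * z ^ ((1:ℂ)/2) * (z - 1) ^ ((1:ℂ)/2))^2 = (-(2 * (z - 1/2)))^2 := by
    rw [show 2 * z ^ ((1:ℂ)/2) * (z - 1) ^ ((1:ℂ)/2) = -(2 * (z - 1/2)) by linear_combination h]
  have : (0:ℂ) = 1 := by linear_combination h2 - h3
  norm_num at this

lemma log_sub_log {u v : ℂ} (hu : u ≠ 0) (hv : v ≠ 0)
    (him : (0 ≤ u.im ∧ 0 ≤ v.im) ∨ (u.im < 0 ∧ v.im < 0))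
    (hre : 0 < (u / v).re) :
    Complex.log u - Complex.log v = Complex.log (u / v) := by
  have hw : u / v ≠ 0 := div_ne_zero hu hv
  have hexp : Complex.exp (Complex.log u - Complex.log v - Complex.log (u/v)) = 1 := by
    rw [Complex.exp_sub, Complex.exp_sub, Complex.exp_log hu, Complex.exp_log hv,
      Complex.exp_log hw]
    field_simp
  obtain ⟨n, hn⟩ := Complex.exp_eq_one_iff.mp hexp
  have him_eq := congrArg Complex.im hn
  simp only [Complex.sub_im, Complex.log_im, Complex.mul_im, Complex.mul_re, Complex.intCast_im,
    Complex.intCast_re, Complex.ofReal_re, Complex.ofReal_im, Complex.I_re, Complex.I_im,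
    Complex.mul_I_im, Complex.mul_I_re, Complex.re_ofNat, Complex.im_ofNat] at him_eq
  ring_nf at him_eq
  rw [← div_eq_mul_inv] at him_eq
  have harg : |Complex.arg (u/v)| < Real.pi/2 :=
    Complex.abs_arg_lt_pi_div_two_iff.mpr (Or.inl hre)
  have harg' := abs_lt.mp harg
  have hπ : 0 < Real.pi := Real.pi_pos
  have hbound : -Real.pi ≤ Complex.arg u - Complex.arg v ∧
      Complex.arg u - Complex.arg v ≤ Real.pi := by
    rcases him with ⟨h1, h2⟩ | ⟨h1, h2⟩
    · have a1 := Complex.arg_nonneg_iff.mpr h1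
      have a2 := Complex.arg_nonneg_iff.mpr h2
      have b1 := Complex.arg_le_pi u
      have b2 := Complex.arg_le_pi v
      constructor <;> linarith
    · have a1 := Complex.arg_neg_iff.mpr h1
      have a2 := Complex.arg_neg_iff.mpr h2
      have b1 := Complex.neg_pi_lt_arg u
      have b2 := Complex.neg_pi_lt_arg v
      constructor <;> linarith
  have hn0 : n = 0 := by
    rcases lt_trichotomy n 0 with h | h | h
    · exfalso
      have : (n:ℝ) ≤ -1 := by exact_mod_cast Int.le_sub_one_of_lt h
      nlinarith [him_eq, hbound.1, hbound.2, harg'.1, harg'.2]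
    · exact h
    · exfalso
      have : (1:ℝ) ≤ (n:ℝ) := by exact_mod_cast h
      nlinarith [him_eq, hbound.1, hbound.2, harg'.1, harg'.2]
  rw [hn0] at hn
  simp at hn
  linear_combination hn

lemma cpow_div_cpow {u v : ℂ} (hu : u ≠ 0) (hv : v ≠ 0)
    (him : (0 ≤ u.im ∧ 0 ≤ v.im) ∨ (u.im < 0 ∧ v.im < 0))
    (hre : 0 < (u / v).re) (c : ℂ) : u ^ c / v ^ c = (u / v) ^ c := by
  rw [Complex.cpow_def_of_ne_zero hu, Complex.cpow_def_of_ne_zero hv,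
    Complex.cpow_def_of_ne_zero (div_ne_zero hu hv), ← Complex.exp_sub, ← sub_mul,
    log_sub_log hu hv him hre]

lemma re_cpow_half_nonneg (z : ℂ) : 0 ≤ (z ^ ((1:ℂ)/2)).re := by
  by_cases hz : z = 0
  · simp [hz, Complex.zero_cpow (show ((1:ℂ)/2) ≠ 0 by norm_num)]
  rw [Complex.cpow_def_of_ne_zero hz, Complex.exp_re]
  have him : (Complex.log z * (1/2)).im = z.arg / 2 := by
    simp [Complex.mul_im, Complex.log_im]
    ring
  rw [him]
  have h1 := Complex.neg_pi_lt_arg z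
  have h2 := Complex.arg_le_pi z
  have : 0 ≤ Real.cos (z.arg / 2) :=
    Real.cos_nonneg_of_mem_Icc ⟨by linarith, by linarith⟩
  positivity

lemma im_cpow_half_nonneg {z : ℂ} (hz : 0 ≤ z.im) : 0 ≤ (z ^ ((1:ℂ)/2)).im := by
  by_cases hz0 : z = 0
  · simp [hz0, Complex.zero_cpow (show ((1:ℂ)/2) ≠ 0 by norm_num)]
  rw [Complex.cpow_def_of_ne_zero hz0, Complex.exp_im]
  have him : (Complex.log z * (1/2)).im = z.arg / 2 := by
    simp [Complex.mul_im, Complex.log_im]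
    ring
  rw [him]
  have h1 := Complex.arg_nonneg_iff.mpr hz
  have h2 := Complex.arg_le_pi z
  have hπ := Real.pi_pos
  have : 0 ≤ Real.sin (z.arg / 2) :=
    Real.sin_nonneg_of_nonneg_of_le_pi (by linarith) (by linarith)
  positivity

lemma im_cpow_half_nonpos {z : ℂ} (hz : z.im < 0) : (z ^ ((1:ℂ)/2)).im ≤ 0 := by
  have hz0 : z ≠ 0 := by intro h; rw [h] at hz; simp at hz
  rw [Complex.cpow_def_of_ne_zero hz0, Complex.exp_im]
  have him : (Complex.log z * (1/2)).im = z.arg / 2 := by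
    simp [Complex.mul_im, Complex.log_im]
    ring
  rw [him]
  have h1 := Complex.arg_neg_iff.mpr hz
  have h2 := Complex.neg_pi_lt_arg z
  have hπ := Real.pi_pos
  have hs : Real.sin (z.arg / 2) ≤ 0 := by
    have := Real.sin_nonneg_of_nonneg_of_le_pi (x := -(z.arg/2)) (by linarith) (by linarith)
    rw [Real.sin_neg] at this
    linarith
  have he := Real.exp_pos ((Complex.log z * (1/2)).re)
  nlinarith

lemma him_phi (z : ℂ) :
    (0 ≤ z.im ∧ 0 ≤ (phiMap z).im) ∨ (z.im < 0 ∧ (phiMap z).im < 0) := by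
  have himz1 : (z - 1).im = z.im := by simp
  rcases le_or_gt 0 z.im with h | h
  · left
    refine ⟨h, ?_⟩
    have h1 := re_cpow_half_nonneg z
    have h2 := re_cpow_half_nonneg (z - 1)
    have h3 := im_cpow_half_nonneg h
    have h4 := im_cpow_half_nonneg (z := z - 1) (by rw [himz1]; exact h)
    simp only [phiMap, Complex.add_im, Complex.mul_im, Complex.mul_re]
    simp
    nlinarith
  · right
    refine ⟨h, ?_⟩
    have h1 := re_cpow_half_nonneg z
    have h2 := re_cpow_half_nonneg (z - 1)
    have h3 := im_cpow_half_nonpos h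
    have h4 := im_cpow_half_nonpos (z := z - 1) (by rw [himz1]; exact h)
    simp only [phiMap, Complex.add_im, Complex.mul_im, Complex.mul_re]
    simp
    nlinarith

end Helpers

section MatHelpers

/-- The matrix-valued function of which `Pinfty` is a composition. -/
noncomputable def Mat (α : ℝ) (a d : ℂ) : Matrix (Fin 2) (Fin 2) ℂ :=
  !![(2:ℂ) ^ (-α : ℂ), 0; 0, (2:ℂ) ^ (α : ℂ)] *
  !![(a + a⁻¹)/2, (a - a⁻¹)/(2*Complex.I);
     -((a - a⁻¹)/(2*Complex.I)), (a + a⁻¹)/2] *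
  !![d⁻¹, 0; 0, d]

lemma Pinfty_eq (α : ℝ) (z : ℂ) : Pinfty α z = Mat α (aFun z) (szego α z) := rfl

lemma Mat_eq (α : ℝ) (a d : ℂ) : Mat α a d =
    !![(2:ℂ) ^ (-α : ℂ) * ((a + a⁻¹)/2) * d⁻¹, (2:ℂ) ^ (-α : ℂ) * ((a - a⁻¹)/(2*Complex.I)) * d;
       -((2:ℂ) ^ (α : ℂ) * ((a - a⁻¹)/(2*Complex.I)) * d⁻¹), (2:ℂ) ^ (α : ℂ) * ((a + a⁻¹)/2) * d] := by
  unfold Mat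
  ext i j
  fin_cases i <;> fin_cases j <;>
    simp [Matrix.mul_apply, Fin.sum_univ_two] <;> ring

lemma two_cpow_ne (r : ℝ) : (2:ℂ) ^ (r : ℂ) ≠ 0 := by
  intro h
  rw [Complex.cpow_eq_zero_iff] at h
  exact two_ne_zero h.1

lemma two_cpow_mul (α : ℝ) : (2:ℂ) ^ (-α : ℂ) * (2:ℂ) ^ (α : ℂ) = 1 := by
  rw [← Complex.cpow_add _ _ (by norm_num : (2:ℂ) ≠ 0)]
  norm_num

lemma tendsto_matrix2 {ι : Type*} {l : Filter ι} {f g h k : ι → ℂ} {a b c d : ℂ}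
    (hf : Tendsto f l (nhds a)) (hg : Tendsto g l (nhds b))
    (hh : Tendsto h l (nhds c)) (hk : Tendsto k l (nhds d)) :
    Tendsto (fun t => !![f t, g t; h t, k t]) l (nhds !![a, b; c, d]) := by
  refine tendsto_pi_nhds.mpr fun i => tendsto_pi_nhds.mpr fun j => ?_
  fin_cases i <;> fin_cases j <;> simpa

lemma tendsto_Mat {ι : Type*} {l : Filter ι} {f g : ι → ℂ} {a d : ℂ} (α : ℝ)
    (hf : Tendsto f l (nhds a)) (hg : Tendsto g l (nhds d)) (ha : a ≠ 0) (hd : d ≠ 0) :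
    Tendsto (fun t => Mat α (f t) (g t)) l (nhds (Mat α a d)) := by
  unfold Mat
  have hinv := hf.inv₀ ha
  have hdinv := hg.inv₀ hd
  exact (tendsto_const_nhds.mul (tendsto_matrix2
      ((hf.add hinv).div_const 2) ((hf.sub hinv).div_const (2*Complex.I))
      (((hf.sub hinv).div_const (2*Complex.I)).neg) ((hf.add hinv).div_const 2))).mul
    (tendsto_matrix2 hdinv tendsto_const_nhds tendsto_const_nhds hg)

lemma Mat_one (α : ℝ) : Mat α 1 ((2:ℂ) ^ (-α : ℂ)) = 1 := by
  rw [Mat_eq, Matrix.one_fin_two]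
  have h1 := two_cpow_ne (-α)
  have h2 := two_cpow_mul α
  ext i j
  fin_cases i <;> fin_cases j <;>
    simp only [Matrix.cons_val', Matrix.cons_val_zero, Matrix.cons_val_one, Matrix.head_cons,
      Matrix.empty_val', Matrix.cons_val_fin_one, Matrix.head_fin_const, Fin.zero_eta, Fin.mk_one, Matrix.of_apply] <;>
    field_simp
  · linear_combination
  · linear_combination
  · linear_combination
  · linear_combination 2 * h2

lemma Mat_jump (α : ℝ) {a dp dm w : ℂ} (ha : a ≠ 0) (hdp : dp ≠ 0) (hdm : dm ≠ 0)
    (hw : w ≠ 0) (hrel : dp * dm = w) :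
    Mat α (Complex.I * a) dp = Mat α a dm * !![0, w; -w⁻¹, 0] := by
  rw [Mat_eq, Mat_eq, Matrix.mul_fin_two]
  have hI := Complex.I_ne_zero
  have haI : Complex.I * a ≠ 0 := mul_ne_zero hI ha
  ext i j
  fin_cases i <;> fin_cases j <;>
    simp only [Matrix.cons_val', Matrix.cons_val_zero, Matrix.cons_val_one, Matrix.head_cons,
      Matrix.empty_val', Matrix.cons_val_fin_one, Matrix.head_fin_const, Fin.zero_eta, Fin.mk_one, Matrix.of_apply]
  all_goals rw [← hrel]
  all_goals field_simp
  · linear_combination (a^2*dm) * Complex.I_sq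
  · linear_combination (-dp) * Complex.I_sq
  · linear_combination (dm) * Complex.I_sq
  · linear_combination (a^2*dp) * Complex.I_sq

lemma Mat_det (α : ℝ) {a d : ℂ} (ha : a ≠ 0) (hd : d ≠ 0) : (Mat α a d).det = 1 := by
  unfold Mat
  rw [Matrix.det_mul, Matrix.det_mul, Matrix.det_fin_two_of, Matrix.det_fin_two_of,
    Matrix.det_fin_two_of]
  have h2 := two_cpow_mul α
  have hb : a * a⁻¹ = 1 := mul_inv_cancel₀ ha
  have hinvI : (2*Complex.I)⁻¹ = 2⁻¹ * -Complex.I := by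
    rw [mul_inv, Complex.inv_I]
  have key : (a + a⁻¹)/2 * ((a + a⁻¹)/2)
      - (a - a⁻¹)/(2*Complex.I) * -((a - a⁻¹)/(2*Complex.I)) = 1 := by
    rw [div_eq_mul_inv ((a:ℂ) - a⁻¹), hinvI]
    linear_combination hb + ((a - a⁻¹)^2/4) * Complex.I_sq
  have h3 : d⁻¹ * d - 0 * 0 = 1 := by
    rw [inv_mul_cancel₀ hd]; ring
  rw [key, h3]
  have : (2:ℂ) ^ (-α : ℂ) * (2:ℂ) ^ (α : ℂ) - 0 * 0 = 1 := by rw [← h2]; ring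
  rw [this]
  ring

end MatHelpers

section Infinity



lemma tendsto_abs_cobounded : Tendsto (fun z : ℂ => ‖z‖) (comap (fun z : ℂ => ‖z‖) atTop) atTop :=
  tendsto_comap

lemma tendsto_inv_cobounded : Tendsto (fun z : ℂ => z⁻¹) (comap (fun z : ℂ => ‖z‖) atTop) (nhds 0) := by
  rw [tendsto_zero_iff_norm_tendsto_zero]
  have h := tendsto_abs_cobounded.inv_tendsto_atTop
  apply h.congr
  intro z
  simp [norm_inv]

lemma eventually_big : ∀ᶠ z : ℂ in comap (fun z : ℂ => ‖z‖) atTop, 2 ≤ ‖z‖ :=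
  tendsto_abs_cobounded.eventually (eventually_ge_atTop 2)

lemma big_facts {z : ℂ} (hz : 2 ≤ ‖z‖) :
    z ≠ 0 ∧ z - 1 ≠ 0 ∧ 0 < ((z-1) / z).re := by
  have hz0 : z ≠ 0 := by
    intro h; rw [h] at hz; simp at hz; linarith
  have hz1 : z - 1 ≠ 0 := by
    intro h
    have : z = 1 := by linear_combination h
    rw [this] at hz; simp at hz
  refine ⟨hz0, hz1, ?_⟩
  have heq : (z - 1)/z = 1 - z⁻¹ := by field_simp
  rw [heq]
  have h1 : (z⁻¹).re ≤ ‖z‖⁻¹ := by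
    calc (z⁻¹).re ≤ ‖z⁻¹‖ := Complex.re_le_norm _
    _ = ‖z‖⁻¹ := by rw [norm_inv]
  have h2 : ‖z‖⁻¹ ≤ 2⁻¹ := by
    apply inv_anti₀ (by norm_num) hz
  have : (1 - z⁻¹).re = 1 - (z⁻¹).re := by simp
  rw [this]
  linarith

lemma him_sub_one (z : ℂ) :
    (0 ≤ (z-1).im ∧ 0 ≤ z.im) ∨ ((z-1).im < 0 ∧ z.im < 0) := by
  have h : (z-1).im = z.im := by simp
  rcases le_or_gt 0 z.im with hh | hh
  · exact Or.inl ⟨by rw [h]; exact hh, hh⟩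
  · exact Or.inr ⟨by rw [h]; exact hh, hh⟩

lemma aFun_eventually :
    aFun =ᶠ[comap (fun z : ℂ => ‖z‖) atTop] fun z => (1 - z⁻¹) ^ ((1:ℂ)/4) := by
  filter_upwards [eventually_big] with z hz
  obtain ⟨hz0, hz1, hre⟩ := big_facts hz
  have heq : (z - 1)/z = 1 - z⁻¹ := by field_simp
  rw [aFun, cpow_div_cpow hz1 hz0 (him_sub_one z) hre, heq]

lemma tendsto_one_sub_inv :
    Tendsto (fun z : ℂ => 1 - z⁻¹) (comap (fun z : ℂ => ‖z‖) atTop) (nhds 1) := by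
  have := tendsto_const_nhds (x := (1:ℂ)) (f := comap (fun z : ℂ => ‖z‖) atTop) |>.sub tendsto_inv_cobounded
  simpa using this

lemma tendsto_aFun_cobounded :
    Tendsto aFun (comap (fun z : ℂ => ‖z‖) atTop) (nhds 1) := by
  have h2 : Tendsto (fun z : ℂ => (1 - z⁻¹) ^ ((1:ℂ)/4)) (comap (fun z : ℂ => ‖z‖) atTop) (nhds 1) := by
    have hc := (continuousAt_cpow_const (a := (1:ℂ)) (b := (1:ℂ)/4)
      (Or.inl (by norm_num))).tendsto.comp tendsto_one_sub_inv
    simpa [Function.comp_def] using hc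
  exact h2.congr' aFun_eventually.symm

lemma phi_div_eventually :
    (fun z : ℂ => phiMap z / z) =ᶠ[comap (fun z : ℂ => ‖z‖) atTop]
      fun z => 2 - z⁻¹ + 2 * (1 - z⁻¹) ^ ((1:ℂ)/2) := by
  filter_upwards [eventually_big] with z hz
  obtain ⟨hz0, hz1, hre⟩ := big_facts hz
  have heq : (z - 1)/z = 1 - z⁻¹ := by field_simp
  have hb : (z-1) ^ ((1:ℂ)/2) / z ^ ((1:ℂ)/2) = (1 - z⁻¹) ^ ((1:ℂ)/2) := by
    rw [cpow_div_cpow hz1 hz0 (him_sub_one z) hre, heq]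
  have hs := sq_cpow_half hz0
  have hhalf_ne : z ^ ((1:ℂ)/2) ≠ 0 := by
    intro h
    rw [h] at hs
    simp at hs
    exact hz0 hs.symm
  have hs2 : (z ^ ((1:ℂ)/2))^2 = z := by rw [sq]; exact hs
  rw [phiMap, ← hb]
  field_simp
  linear_combination (2*(z-1) ^ ((1:ℂ)/2)) * hs2

lemma tendsto_phi_div :
    Tendsto (fun z : ℂ => phiMap z / z) (comap (fun z : ℂ => ‖z‖) atTop) (nhds 4) := by
  have hg : Tendsto (fun z : ℂ => 2 - z⁻¹ + 2 * (1 - z⁻¹) ^ ((1:ℂ)/2)) (comap (fun z : ℂ => ‖z‖) atTop)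
      (nhds 4) := by
    have h1 : Tendsto (fun z : ℂ => (1 - z⁻¹) ^ ((1:ℂ)/2)) (comap (fun z : ℂ => ‖z‖) atTop) (nhds 1) := by
      have hc := (continuousAt_cpow_const (a := (1:ℂ)) (b := (1:ℂ)/2)
        (Or.inl (by norm_num))).tendsto.comp tendsto_one_sub_inv
      simpa [Function.comp_def] using hc
    have := ((tendsto_const_nhds (x := (2:ℂ))).sub tendsto_inv_cobounded).add
      ((tendsto_const_nhds (x := (2:ℂ))).mul h1)
    rw [show (4:ℂ) = 2 - 0 + 2*1 by norm_num]
    exact this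
  exact hg.congr' phi_div_eventually.symm

lemma tendsto_z_div_phi :
    Tendsto (fun z : ℂ => z / phiMap z) (comap (fun z : ℂ => ‖z‖) atTop) (nhds 4⁻¹) := by
  have h := tendsto_phi_div.inv₀ (by norm_num)
  apply h.congr' 
  filter_upwards [eventually_big] with z hz
  obtain ⟨hz0, _, _⟩ := big_facts hz
  rw [inv_div]

lemma szego_eventually (α : ℝ) :
    (szego α) =ᶠ[comap (fun z : ℂ => ‖z‖) atTop] fun z => (z / phiMap z) ^ ((α:ℂ)/2) := by
  have hre_ev : ∀ᶠ z : ℂ in comap (fun z : ℂ => ‖z‖) atTop, 0 < (z / phiMap z).re := by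
    have := (Complex.continuous_re.tendsto _).comp tendsto_z_div_phi
    apply this.eventually
    apply eventually_gt_nhds
    norm_num
  filter_upwards [eventually_big, hre_ev] with z hz hre
  obtain ⟨hz0, hz1, _⟩ := big_facts hz
  rw [szego, cpow_div_cpow hz0 (phiMap_ne_zero z) ?him hre]
  · rcases him_phi z with ⟨h1, h2⟩ | ⟨h1, h2⟩
    · exact Or.inl ⟨h1, h2⟩
    · exact Or.inr ⟨h1, h2⟩

lemma quarter_cpow (α : ℝ) : ((4:ℂ)⁻¹) ^ ((α:ℂ)/2) = (2:ℂ) ^ (-α : ℂ) := by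
  have e1 : ((α:ℂ)/2) = (((α/2 : ℝ)) : ℂ) := by push_cast; ring
  have e2 : (-α : ℂ) = ((-α : ℝ) : ℂ) := by push_cast; ring
  rw [e1, e2]
  rw [show ((4:ℂ)⁻¹) = (((4:ℝ)⁻¹ : ℝ) : ℂ) by norm_num]
  rw [show ((2:ℂ)) = (((2:ℝ)) : ℂ) by norm_num]
  rw [← Complex.ofReal_cpow (by norm_num) (α/2), ← Complex.ofReal_cpow (by norm_num) (-α)]
  congr 1
  rw [Real.rpow_def_of_pos (by norm_num : (0:ℝ) < 4⁻¹), Real.rpow_def_of_pos (by norm_num : (0:ℝ) < 2)]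
  rw [Real.log_inv, show (4:ℝ) = 2^(2:ℕ) by norm_num, Real.log_pow]
  congr 1
  push_cast
  ring

lemma tendsto_szego_cobounded (α : ℝ) :
    Tendsto (szego α) (comap (fun z : ℂ => ‖z‖) atTop) (nhds ((2:ℂ) ^ (-α : ℂ))) := by
  have h1 : Tendsto (fun z : ℂ => (z / phiMap z) ^ ((α:ℂ)/2)) (comap (fun z : ℂ => ‖z‖) atTop)
      (nhds (((4:ℂ)⁻¹) ^ ((α:ℂ)/2))) :=
    (continuousAt_cpow_const (Or.inl (by norm_num))).tendsto.comp tendsto_z_div_phi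
  rw [quarter_cpow] at h1
  exact h1.congr' (szego_eventually α).symm



end Infinity

section Paths

lemma tendsto_path_plus (y : ℝ) :
    Tendsto (fun ε : ℝ => (y:ℂ) + ε * Complex.I) (nhdsWithin 0 (Set.Ioi 0)) (nhds (y:ℂ)) := by
  have hc : Continuous (fun ε : ℝ => (y:ℂ) + ε * Complex.I) := by continuity
  have := (hc.tendsto 0).mono_left (nhdsWithin_le_nhds (s := Set.Ioi 0))
  simpa using this

lemma tendsto_path_minus (y : ℝ) :
    Tendsto (fun ε : ℝ => (y:ℂ) - ε * Complex.I) (nhdsWithin 0 (Set.Ioi 0)) (nhds (y:ℂ)) := by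
  have hc : Continuous (fun ε : ℝ => (y:ℂ) - ε * Complex.I) := by continuity
  have := (hc.tendsto 0).mono_left (nhdsWithin_le_nhds (s := Set.Ioi 0))
  simpa using this

lemma tendsto_cpow_neg_plus {y : ℝ} (hy : y < 0) (c : ℂ) :
    Tendsto (fun ε : ℝ => ((y:ℂ) + ε * Complex.I) ^ c) (nhdsWithin 0 (Set.Ioi 0))
      (nhds (Complex.exp ((Real.log (-y) + Real.pi * Complex.I) * c))) := by
  have hbase : Tendsto (fun ε : ℝ => (y:ℂ) + ε * Complex.I) (nhdsWithin 0 (Set.Ioi 0))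
      (nhdsWithin (y:ℂ) {z : ℂ | 0 ≤ z.im}) := by
    apply tendsto_nhdsWithin_of_tendsto_nhds_of_eventually_within _ (tendsto_path_plus y)
    filter_upwards [self_mem_nhdsWithin] with ε (hε : 0 < ε)
    simp [Set.mem_setOf_eq, hε.le]
  have hlog := (Complex.tendsto_log_nhdsWithin_im_nonneg_of_re_neg_of_im_zero
      (by simpa using hy) (by simp)).comp hbase
  have habs : ‖(y:ℂ)‖ = -y := by rw [Complex.norm_real, Real.norm_eq_abs]; exact abs_of_neg hy
  rw [habs] at hlog
  have hmul := hlog.mul_const c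
  have hfin := (Complex.continuous_exp.tendsto _).comp hmul
  apply hfin.congr'
  filter_upwards [self_mem_nhdsWithin] with ε (hε : 0 < ε)
  have hne : (y:ℂ) + ε * Complex.I ≠ 0 := by
    intro h
    have := congrArg Complex.im h
    simp at this
    exact hε.ne' this
  simp only [Function.comp]
  rw [Complex.cpow_def_of_ne_zero hne]

lemma tendsto_cpow_neg_minus {y : ℝ} (hy : y < 0) (c : ℂ) :
    Tendsto (fun ε : ℝ => ((y:ℂ) - ε * Complex.I) ^ c) (nhdsWithin 0 (Set.Ioi 0))
      (nhds (Complex.exp ((Real.log (-y) - Real.pi * Complex.I) * c))) := by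
  have hbase : Tendsto (fun ε : ℝ => (y:ℂ) - ε * Complex.I) (nhdsWithin 0 (Set.Ioi 0))
      (nhdsWithin (y:ℂ) {z : ℂ | z.im < 0}) := by
    apply tendsto_nhdsWithin_of_tendsto_nhds_of_eventually_within _ (tendsto_path_minus y)
    filter_upwards [self_mem_nhdsWithin] with ε (hε : 0 < ε)
    simp [Set.mem_setOf_eq, hε]
  have hlog := (Complex.tendsto_log_nhdsWithin_im_neg_of_re_neg_of_im_zero
      (by simpa using hy) (by simp)).comp hbase
  have habs : ‖(y:ℂ)‖ = -y := by rw [Complex.norm_real, Real.norm_eq_abs]; exact abs_of_neg hy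
  rw [habs] at hlog
  have hmul := hlog.mul_const c
  have hfin := (Complex.continuous_exp.tendsto _).comp hmul
  apply hfin.congr'
  filter_upwards [self_mem_nhdsWithin] with ε (hε : 0 < ε)
  have hne : (y:ℂ) - ε * Complex.I ≠ 0 := by
    intro h
    have := congrArg Complex.im h
    simp at this
    exact hε.ne' this
  simp only [Function.comp]
  rw [Complex.cpow_def_of_ne_zero hne]

lemma tendsto_cpow_pos_plus {y : ℝ} (hy : 0 < y) (c : ℂ) :
    Tendsto (fun ε : ℝ => ((y:ℂ) + ε * Complex.I) ^ c) (nhdsWithin 0 (Set.Ioi 0))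
      (nhds ((y:ℂ) ^ c)) :=
  (continuousAt_cpow_const (Or.inl (by simpa using hy))).tendsto.comp (tendsto_path_plus y)

lemma tendsto_cpow_pos_minus {y : ℝ} (hy : 0 < y) (c : ℂ) :
    Tendsto (fun ε : ℝ => ((y:ℂ) - ε * Complex.I) ^ c) (nhdsWithin 0 (Set.Ioi 0))
      (nhds ((y:ℂ) ^ c)) :=
  (continuousAt_cpow_const (Or.inl (by simpa using hy))).tendsto.comp (tendsto_path_minus y)

end Paths

/-! boundary limit values -/
noncomputable def LpF (x : ℝ) : ℂ := (Real.log (1-x) : ℂ) + Real.pi * Complex.I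
noncomputable def LmF (x : ℝ) : ℂ := (Real.log (1-x) : ℂ) - Real.pi * Complex.I
noncomputable def apF (x : ℝ) : ℂ := Complex.exp (LpF x * (1/4)) / (x:ℂ) ^ ((1:ℂ)/4)
noncomputable def amF (x : ℝ) : ℂ := Complex.exp (LmF x * (1/4)) / (x:ℂ) ^ ((1:ℂ)/4)
noncomputable def ppF (x : ℝ) : ℂ :=
  2*((x:ℂ) - 1/2) + 2*(x:ℂ) ^ ((1:ℂ)/2) * Complex.exp (LpF x * (1/2))
noncomputable def pmF (x : ℝ) : ℂ :=
  2*((x:ℂ) - 1/2) + 2*(x:ℂ) ^ ((1:ℂ)/2) * Complex.exp (LmF x * (1/2))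
noncomputable def dpF (α x : ℝ) : ℂ := (x:ℂ) ^ ((α:ℂ)/2) / (ppF x) ^ ((α:ℂ)/2)
noncomputable def dmF (α x : ℝ) : ℂ := (x:ℂ) ^ ((α:ℂ)/2) / (pmF x) ^ ((α:ℂ)/2)

section boundary
variable {x : ℝ}

lemma hx1 (hx : x ∈ Set.Ioo (0:ℝ) 1) : x - 1 < 0 := by have := hx.2; linarith
lemma hlog1x : -(x - 1) = 1 - x := by ring

/-- limit of `aFun` along the `+` path -/
lemma tendsto_aFun_plus (hx : x ∈ Set.Ioo (0:ℝ) 1) :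
    Tendsto (fun ε : ℝ => aFun ((x:ℂ) + ε * Complex.I)) (nhdsWithin 0 (Set.Ioi 0))
      (nhds (apF x)) := by
  have hnum : Tendsto (fun ε : ℝ => ((x:ℂ) + ε * Complex.I - 1) ^ ((1:ℂ)/4))
      (nhdsWithin 0 (Set.Ioi 0)) (nhds (Complex.exp (LpF x * (1/4)))) := by
    have h := tendsto_cpow_neg_plus (hx1 hx) ((1:ℂ)/4)
    rw [hlog1x] at h
    have : (fun ε : ℝ => (((x - 1 : ℝ):ℂ) + ε * Complex.I) ^ ((1:ℂ)/4))
        = fun ε : ℝ => ((x:ℂ) + ε * Complex.I - 1) ^ ((1:ℂ)/4) := by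
      funext ε; push_cast; ring_nf
    rw [this] at h
    exact h
  have hden := tendsto_cpow_pos_plus hx.1 ((1:ℂ)/4)
  have hden_ne : (x:ℂ) ^ ((1:ℂ)/4) ≠ 0 := by
    rw [Ne, Complex.cpow_eq_zero_iff]
    push_neg
    intro h
    exact absurd (Complex.ofReal_eq_zero.mp h) (ne_of_gt hx.1)
  exact hnum.div hden hden_ne

lemma tendsto_aFun_minus (hx : x ∈ Set.Ioo (0:ℝ) 1) :
    Tendsto (fun ε : ℝ => aFun ((x:ℂ) - ε * Complex.I)) (nhdsWithin 0 (Set.Ioi 0))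
      (nhds (amF x)) := by
  have hnum : Tendsto (fun ε : ℝ => ((x:ℂ) - ε * Complex.I - 1) ^ ((1:ℂ)/4))
      (nhdsWithin 0 (Set.Ioi 0)) (nhds (Complex.exp (LmF x * (1/4)))) := by
    have h := tendsto_cpow_neg_minus (hx1 hx) ((1:ℂ)/4)
    rw [hlog1x] at h
    have : (fun ε : ℝ => (((x - 1 : ℝ):ℂ) - ε * Complex.I) ^ ((1:ℂ)/4))
        = fun ε : ℝ => ((x:ℂ) - ε * Complex.I - 1) ^ ((1:ℂ)/4) := by
      funext ε; push_cast; ring_nf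
    rw [this] at h
    exact h
  have hden := tendsto_cpow_pos_minus hx.1 ((1:ℂ)/4)
  have hden_ne : (x:ℂ) ^ ((1:ℂ)/4) ≠ 0 := by
    rw [Ne, Complex.cpow_eq_zero_iff]
    push_neg
    intro h
    exact absurd (Complex.ofReal_eq_zero.mp h) (ne_of_gt hx.1)
  exact hnum.div hden hden_ne

lemma tendsto_phi_plus (hx : x ∈ Set.Ioo (0:ℝ) 1) :
    Tendsto (fun ε : ℝ => phiMap ((x:ℂ) + ε * Complex.I)) (nhdsWithin 0 (Set.Ioi 0))
      (nhds (ppF x)) := by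
  have h1 := tendsto_path_plus x
  have h2 := tendsto_cpow_pos_plus hx.1 ((1:ℂ)/2)
  have h3 : Tendsto (fun ε : ℝ => ((x:ℂ) + ε * Complex.I - 1) ^ ((1:ℂ)/2))
      (nhdsWithin 0 (Set.Ioi 0)) (nhds (Complex.exp (LpF x * (1/2)))) := by
    have h := tendsto_cpow_neg_plus (hx1 hx) ((1:ℂ)/2)
    rw [hlog1x] at h
    have : (fun ε : ℝ => (((x - 1 : ℝ):ℂ) + ε * Complex.I) ^ ((1:ℂ)/2))
        = fun ε : ℝ => ((x:ℂ) + ε * Complex.I - 1) ^ ((1:ℂ)/2) := by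
      funext ε; push_cast; ring_nf
    rw [this] at h
    exact h
  unfold phiMap ppF
  exact ((tendsto_const_nhds (x := (2:ℂ))).mul (h1.sub tendsto_const_nhds)).add
    (((tendsto_const_nhds (x := (2:ℂ))).mul h2).mul h3)

lemma tendsto_phi_minus (hx : x ∈ Set.Ioo (0:ℝ) 1) :
    Tendsto (fun ε : ℝ => phiMap ((x:ℂ) - ε * Complex.I)) (nhdsWithin 0 (Set.Ioi 0))
      (nhds (pmF x)) := by
  have h1 := tendsto_path_minus x
  have h2 := tendsto_cpow_pos_minus hx.1 ((1:ℂ)/2)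
  have h3 : Tendsto (fun ε : ℝ => ((x:ℂ) - ε * Complex.I - 1) ^ ((1:ℂ)/2))
      (nhdsWithin 0 (Set.Ioi 0)) (nhds (Complex.exp (LmF x * (1/2)))) := by
    have h := tendsto_cpow_neg_minus (hx1 hx) ((1:ℂ)/2)
    rw [hlog1x] at h
    have : (fun ε : ℝ => (((x - 1 : ℝ):ℂ) - ε * Complex.I) ^ ((1:ℂ)/2))
        = fun ε : ℝ => ((x:ℂ) - ε * Complex.I - 1) ^ ((1:ℂ)/2) := by
      funext ε; push_cast; ring_nf
    rw [this] at h
    exact h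
  unfold phiMap pmF
  exact ((tendsto_const_nhds (x := (2:ℂ))).mul (h1.sub tendsto_const_nhds)).add
    (((tendsto_const_nhds (x := (2:ℂ))).mul h2).mul h3)

/-! explicit forms -/

lemma exp_Lp_half : Complex.exp (LpF x * (1/2))
    = (Real.exp (Real.log (1-x)/2) : ℂ) * Complex.I := by
  rw [show LpF x * (1/2) = ((Real.log (1-x)/2 : ℝ) : ℂ) + ((Real.pi/2 : ℝ) : ℂ) * Complex.I by
    unfold LpF; push_cast; ring]
  rw [Complex.exp_add, Complex.exp_mul_I, ← Complex.ofReal_cos, ← Complex.ofReal_sin,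
    Real.cos_pi_div_two, Real.sin_pi_div_two, ← Complex.ofReal_exp]
  push_cast
  ring

lemma exp_Lm_half : Complex.exp (LmF x * (1/2))
    = -((Real.exp (Real.log (1-x)/2) : ℂ) * Complex.I) := by
  rw [show LmF x * (1/2) = ((Real.log (1-x)/2 : ℝ) : ℂ) + ((-(Real.pi/2) : ℝ) : ℂ) * Complex.I by
    unfold LmF; push_cast; ring]
  rw [Complex.exp_add, Complex.exp_mul_I, ← Complex.ofReal_cos, ← Complex.ofReal_sin,
    Real.cos_neg, Real.sin_neg, Real.cos_pi_div_two, Real.sin_pi_div_two, ← Complex.ofReal_exp]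
  push_cast
  ring

lemma x_half (hx : x ∈ Set.Ioo (0:ℝ) 1) :
    (x:ℂ) ^ ((1:ℂ)/2) = ((Real.sqrt x : ℝ) : ℂ) := by
  rw [Real.sqrt_eq_rpow, show ((1:ℂ)/2) = (((1/2 : ℝ)) : ℂ) by push_cast; ring]
  rw [← Complex.ofReal_cpow hx.1.le]

lemma pp_form (hx : x ∈ Set.Ioo (0:ℝ) 1) : ppF x =
    ((2*x - 1 : ℝ) : ℂ) + ((2 * Real.sqrt x * Real.exp (Real.log (1-x)/2) : ℝ) : ℂ) * Complex.I := by
  unfold ppF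
  rw [exp_Lp_half, x_half hx]
  push_cast
  ring

lemma pm_form (hx : x ∈ Set.Ioo (0:ℝ) 1) : pmF x =
    ((2*x - 1 : ℝ) : ℂ) - ((2 * Real.sqrt x * Real.exp (Real.log (1-x)/2) : ℝ) : ℂ) * Complex.I := by
  unfold pmF
  rw [exp_Lm_half, x_half hx]
  push_cast
  ring

lemma b_pos (hx : x ∈ Set.Ioo (0:ℝ) 1) :
    0 < 2 * Real.sqrt x * Real.exp (Real.log (1-x)/2) := by
  have h1 : 0 < Real.sqrt x := Real.sqrt_pos.mpr hx.1
  have h2 := Real.exp_pos (Real.log (1-x)/2)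
  positivity

lemma pp_im_pos (hx : x ∈ Set.Ioo (0:ℝ) 1) : 0 < (ppF x).im := by
  rw [pp_form hx]
  simp only [Complex.add_im, Complex.ofReal_im, Complex.mul_im, Complex.I_im, Complex.I_re,
    Complex.ofReal_re, mul_one, mul_zero, add_zero, zero_add]
  exact b_pos hx

lemma pm_im_neg (hx : x ∈ Set.Ioo (0:ℝ) 1) : (pmF x).im < 0 := by
  rw [pm_form hx]
  simp only [Complex.sub_im, Complex.ofReal_im, Complex.mul_im, Complex.I_im, Complex.I_re,
    Complex.ofReal_re, mul_one, mul_zero, add_zero, zero_add, zero_sub]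
  simpa using b_pos hx

lemma pp_ne (hx : x ∈ Set.Ioo (0:ℝ) 1) : ppF x ≠ 0 := by
  intro h
  have := pp_im_pos hx
  rw [h] at this
  simp at this

lemma pm_ne (hx : x ∈ Set.Ioo (0:ℝ) 1) : pmF x ≠ 0 := by
  intro h
  have := pm_im_neg hx
  rw [h] at this
  simp at this

lemma pp_abs (hx : x ∈ Set.Ioo (0:ℝ) 1) : ‖ppF x‖ = 1 := by
  have hb2 : (Real.exp (Real.log (1-x)/2))^2 = 1 - x := by
    rw [sq, ← Real.exp_add, show Real.log (1-x)/2 + Real.log (1-x)/2 = Real.log (1-x) by ring]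
    exact Real.exp_log (by linarith [hx.2])
  have hs2 : (Real.sqrt x)^2 = x := Real.sq_sqrt hx.1.le
  have hnorm : Complex.normSq (ppF x) = 1 := by
    rw [pp_form hx, Complex.normSq_add_mul_I]
    nlinarith [hb2, hs2]
  rw [Complex.norm_def, hnorm, Real.sqrt_one]

lemma pm_conj (hx : x ∈ Set.Ioo (0:ℝ) 1) : pmF x = (starRingEnd ℂ) (ppF x) := by
  rw [pp_form hx, pm_form hx]
  apply Complex.ext <;>
    simp only [Complex.add_re, Complex.sub_re, Complex.add_im, Complex.sub_im, Complex.mul_re,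
      Complex.mul_im, Complex.ofReal_re, Complex.ofReal_im, Complex.I_re, Complex.I_im,
      Complex.conj_re, Complex.conj_im] <;> ring

lemma tendsto_szego_plus (α : ℝ) (hx : x ∈ Set.Ioo (0:ℝ) 1) :
    Tendsto (fun ε : ℝ => szego α ((x:ℂ) + ε * Complex.I)) (nhdsWithin 0 (Set.Ioi 0))
      (nhds (dpF α x)) := by
  have hnum := tendsto_cpow_pos_plus hx.1 ((α:ℂ)/2)
  have hden : Tendsto (fun ε : ℝ => (phiMap ((x:ℂ) + ε * Complex.I)) ^ ((α:ℂ)/2))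
      (nhdsWithin 0 (Set.Ioi 0)) (nhds ((ppF x) ^ ((α:ℂ)/2))) :=
    (continuousAt_cpow_const (Or.inr (ne_of_gt (pp_im_pos hx)))).tendsto.comp (tendsto_phi_plus hx)
  have hden_ne : (ppF x) ^ ((α:ℂ)/2) ≠ 0 := by
    rw [Ne, Complex.cpow_eq_zero_iff]
    push_neg
    intro h
    exact absurd h (pp_ne hx)
  exact hnum.div hden hden_ne

lemma tendsto_szego_minus (α : ℝ) (hx : x ∈ Set.Ioo (0:ℝ) 1) :
    Tendsto (fun ε : ℝ => szego α ((x:ℂ) - ε * Complex.I)) (nhdsWithin 0 (Set.Ioi 0))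
      (nhds (dmF α x)) := by
  have hnum := tendsto_cpow_pos_minus hx.1 ((α:ℂ)/2)
  have hden : Tendsto (fun ε : ℝ => (phiMap ((x:ℂ) - ε * Complex.I)) ^ ((α:ℂ)/2))
      (nhdsWithin 0 (Set.Ioi 0)) (nhds ((pmF x) ^ ((α:ℂ)/2))) :=
    (continuousAt_cpow_const (Or.inr (ne_of_lt (pm_im_neg hx)))).tendsto.comp (tendsto_phi_minus hx)
  have hden_ne : (pmF x) ^ ((α:ℂ)/2) ≠ 0 := by
    rw [Ne, Complex.cpow_eq_zero_iff]
    push_neg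
    intro h
    exact absurd h (pm_ne hx)
  exact hnum.div hden hden_ne

/-! algebraic relations -/

lemma ap_eq (hx : x ∈ Set.Ioo (0:ℝ) 1) : apF x = Complex.I * amF x := by
  unfold apF amF
  rw [show LpF x * (1/4) = LmF x * (1/4) + ((Real.pi/2 : ℝ) : ℂ) * Complex.I by
    unfold LpF LmF; push_cast; ring]
  rw [Complex.exp_add, Complex.exp_mul_I, ← Complex.ofReal_cos, ← Complex.ofReal_sin,
    Real.cos_pi_div_two, Real.sin_pi_div_two]
  push_cast
  ring

lemma am_ne (hx : x ∈ Set.Ioo (0:ℝ) 1) : amF x ≠ 0 := by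
  unfold amF
  apply div_ne_zero (Complex.exp_ne_zero _)
  rw [Ne, Complex.cpow_eq_zero_iff]
  push_neg
  intro h
  exact absurd (Complex.ofReal_eq_zero.mp h) (ne_of_gt hx.1)

lemma xc_ne (hx : x ∈ Set.Ioo (0:ℝ) 1) : (x:ℂ) ≠ 0 :=
  Complex.ofReal_ne_zero.mpr (ne_of_gt hx.1)

lemma xpow_ne (α : ℝ) (hx : x ∈ Set.Ioo (0:ℝ) 1) : (x:ℂ) ^ ((α:ℂ)/2) ≠ 0 := by
  rw [Ne, Complex.cpow_eq_zero_iff]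
  push_neg
  intro h
  exact absurd h (xc_ne hx)

lemma dp_ne (α : ℝ) (hx : x ∈ Set.Ioo (0:ℝ) 1) : dpF α x ≠ 0 := by
  unfold dpF
  apply div_ne_zero (xpow_ne α hx)
  rw [Ne, Complex.cpow_eq_zero_iff]
  push_neg
  intro h
  exact absurd h (pp_ne hx)

lemma dm_ne (α : ℝ) (hx : x ∈ Set.Ioo (0:ℝ) 1) : dmF α x ≠ 0 := by
  unfold dmF
  apply div_ne_zero (xpow_ne α hx)
  rw [Ne, Complex.cpow_eq_zero_iff]
  push_neg
  intro h
  exact absurd h (pm_ne hx)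

lemma ppc_pmc (α : ℝ) (hx : x ∈ Set.Ioo (0:ℝ) 1) :
    (ppF x) ^ ((α:ℂ)/2) * (pmF x) ^ ((α:ℂ)/2) = 1 := by
  have harg : (ppF x).arg ≠ Real.pi := by
    intro h
    have := Complex.arg_eq_pi_iff.mp h
    exact absurd this.2 (ne_of_gt (pp_im_pos hx))
  rw [Complex.cpow_def_of_ne_zero (pp_ne hx), Complex.cpow_def_of_ne_zero (pm_ne hx),
    ← Complex.exp_add, ← add_mul, pm_conj hx, Complex.log_conj _ harg,
    Complex.add_conj, Complex.log_re, pp_abs hx, Real.log_one]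
  simp

lemma d_rel (α : ℝ) (hx : x ∈ Set.Ioo (0:ℝ) 1) :
    dpF α x * dmF α x = (x:ℂ) ^ (α:ℂ) := by
  unfold dpF dmF
  rw [div_mul_div_comm, ppc_pmc α hx, div_one, ← Complex.cpow_add _ _ (xc_ne hx)]
  norm_num

end boundary

lemma ap_ne {x : ℝ} (hx : x ∈ Set.Ioo (0:ℝ) 1) : apF x ≠ 0 := by
  unfold apF
  apply div_ne_zero (Complex.exp_ne_zero _)
  rw [Ne, Complex.cpow_eq_zero_iff]
  push_neg
  intro h
  exact absurd (Complex.ofReal_eq_zero.mp h) (ne_of_gt hx.1)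

/-- `det P^{(∞)} ≡ 1` on `ℂ\[0,1]`, `P^{(∞)}(z) → I` as `z → ∞`,
and the boundary values on `(0,1)` satisfy
`P^{(∞)}₊(x) = P^{(∞)}₋(x)·[[0, x^α],[-x^{-α}, 0]]`. -/
theorem outer_parametrix_properties (α : ℝ) (hα : -1 < α) :
    (∀ z ∈ unitSegmentᶜ, (Pinfty α z).det = 1) ∧
    Tendsto (Pinfty α) (comap (fun z : ℂ => ‖z‖) atTop)
      (nhds (1 : Matrix (Fin 2) (Fin 2) ℂ)) ∧
    (∀ x : ℝ, x ∈ Set.Ioo (0:ℝ) 1 → ∃ Pp Pm : Matrix (Fin 2) (Fin 2) ℂ,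
      Tendsto (fun ε : ℝ => Pinfty α ((x : ℂ) + ε * Complex.I))
        (nhdsWithin 0 (Set.Ioi 0)) (nhds Pp) ∧
      Tendsto (fun ε : ℝ => Pinfty α ((x : ℂ) - ε * Complex.I))
        (nhdsWithin 0 (Set.Ioi 0)) (nhds Pm) ∧
      Pp = Pm * !![0, (x : ℂ) ^ (α : ℂ); -((x : ℂ) ^ (-α : ℂ)), 0]) := by
  refine ⟨?_, ?_, ?_⟩
  · -- determinant
    intro z hz
    have hz0 : z ≠ 0 := by
      rintro rfl
      exact hz ⟨0, by norm_num, by norm_num⟩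
    have hz1 : z ≠ 1 := by
      rintro rfl
      exact hz ⟨1, by norm_num, by norm_num⟩
    have ha : aFun z ≠ 0 := by
      unfold aFun
      apply div_ne_zero
      · rw [Ne, Complex.cpow_eq_zero_iff]
        push_neg
        intro h
        exact absurd h (sub_ne_zero.mpr hz1)
      · rw [Ne, Complex.cpow_eq_zero_iff]
        push_neg
        intro h
        exact absurd h hz0
    have hsz : szego α z ≠ 0 := by
      unfold szego
      apply div_ne_zero
      · rw [Ne, Complex.cpow_eq_zero_iff]
        push_neg
        intro h
        exact absurd h hz0
      · rw [Ne, Complex.cpow_eq_zero_iff]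
        push_neg
        intro h
        exact absurd h (phiMap_ne_zero z)
    rw [Pinfty_eq]
    exact Mat_det α ha hsz
  · -- limit at infinity
    have h2ne : (2:ℂ) ^ (-α : ℂ) ≠ 0 := by
      have := two_cpow_ne (-α)
      rwa [Complex.ofReal_neg] at this
    have h := tendsto_Mat α tendsto_aFun_cobounded (tendsto_szego_cobounded α)
      one_ne_zero h2ne
    rw [Mat_one α] at h
    exact h.congr fun z => (Pinfty_eq α z).symm
  · -- boundary values
    intro x hx
    refine ⟨Mat α (apF x) (dpF α x), Mat α (amF x) (dmF α x), ?_, ?_, ?_⟩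
    · have h := tendsto_Mat α (tendsto_aFun_plus hx) (tendsto_szego_plus α hx)
        (ap_ne hx) (dp_ne α hx)
      exact h.congr fun ε => (Pinfty_eq α _).symm
    · have h := tendsto_Mat α (tendsto_aFun_minus hx) (tendsto_szego_minus α hx)
        (am_ne hx) (dm_ne α hx)
      exact h.congr fun ε => (Pinfty_eq α _).symm
    · have hxα_ne : (x:ℂ) ^ (α:ℂ) ≠ 0 := by
        rw [Ne, Complex.cpow_eq_zero_iff]
        push_neg
        intro h
        exact absurd h (xc_ne hx)
      have hneg : (x:ℂ) ^ (-α : ℂ) = ((x:ℂ) ^ (α:ℂ))⁻¹ := by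
        rw [← Complex.cpow_neg]
      rw [hneg, ap_eq hx]
      exact Mat_jump α (am_ne hx) (dp_ne α hx) (dm_ne α hx) hxα_ne (d_rel α hx)
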